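/- Four points in convex position in the plane cannot be encapsulated by three convex sets: if a₀,a₁,a₂,a₃ are in convex position and convex sets A, B, C ⊆ ℝ² \ {a₀,a₁,a₂,a₃} cover a punctured neighborhood of each aᵢ, we reach a contradiction; hence at least 4 convex sets are needed. -/

import Mathlib

open Set

namespace Stmt6

abbrev Pt : Type := ℝ × ℝ

/-- `K` contains points arbitrarily close to `v` in direction `d`. -/
def sees (K : Set Pt) (v d : Pt) : Prop :=
  ∀ ε : ℝ, 0 < ε → ∃ t : ℝ, 0 < t ∧ t < ε ∧ v + t • d ∈ K

lemma sees_total {K : Fin 3 → Set Pt} {v d : Pt} (hd : d ≠ 0)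
    (henc : ∃ N ∈ nhds v, (⋃ i, K i) ∩ N = N \ {v}) : ∃ i, sees (K i) v d := by
  by_contra h
  push_neg at h
  have h' : ∀ i : Fin 3, ∃ ε : ℝ, 0 < ε ∧ ∀ t : ℝ, 0 < t → t < ε → v + t • d ∉ K i := by
    intro i
    have hi := h i
    unfold sees at hi
    push_neg at hi
    obtain ⟨ε, hε, hforall⟩ := hi
    exact ⟨ε, hε, hforall⟩
  obtain ⟨ε0, hε0, h0⟩ := h' 0
  obtain ⟨ε1, hε1, h1⟩ := h' 1
  obtain ⟨ε2, hε2, h2⟩ := h' 2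
  obtain ⟨N, hN, hNeq⟩ := henc
  rw [Metric.mem_nhds_iff] at hN
  obtain ⟨δ, hδ, hball⟩ := hN
  set t := min (min ε0 ε1) (min ε2 (δ / (‖d‖ + 1))) / 2 with ht_def
  have hdpos : (0:ℝ) < δ / (‖d‖ + 1) := by positivity
  have htpos : 0 < t := by
    have := lt_min (lt_min hε0 hε1) (lt_min hε2 hdpos)
    positivity
  have ht0 : t < ε0 := by
    have h1' : t < min (min ε0 ε1) (min ε2 (δ / (‖d‖ + 1))) := by
      rw [ht_def]
      exact half_lt_self (lt_min (lt_min hε0 hε1) (lt_min hε2 hdpos))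
    calc t < _ := h1'
    _ ≤ ε0 := le_trans (min_le_left _ _) (min_le_left _ _)
  have ht1 : t < ε1 := by
    have h1' : t < min (min ε0 ε1) (min ε2 (δ / (‖d‖ + 1))) := by
      rw [ht_def]
      exact half_lt_self (lt_min (lt_min hε0 hε1) (lt_min hε2 hdpos))
    calc t < _ := h1'
    _ ≤ ε1 := le_trans (min_le_left _ _) (min_le_right _ _)
  have ht2 : t < ε2 := by
    have h1' : t < min (min ε0 ε1) (min ε2 (δ / (‖d‖ + 1))) := by
      rw [ht_def]
      exact half_lt_self (lt_min (lt_min hε0 hε1) (lt_min hε2 hdpos))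
    calc t < _ := h1'
    _ ≤ ε2 := le_trans (min_le_right _ _) (min_le_left _ _)
  have htδ : t < δ / (‖d‖ + 1) := by
    have h1' : t < min (min ε0 ε1) (min ε2 (δ / (‖d‖ + 1))) := by
      rw [ht_def]
      exact half_lt_self (lt_min (lt_min hε0 hε1) (lt_min hε2 hdpos))
    calc t < _ := h1'
    _ ≤ _ := le_trans (min_le_right _ _) (min_le_right _ _)
  have hmem : v + t • d ∈ Metric.ball v δ := by
    rw [Metric.mem_ball, dist_self_add_left, norm_smul, Real.norm_eq_abs,
      abs_of_pos htpos]
    have hnd : (0:ℝ) ≤ ‖d‖ := norm_nonneg d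
    have : t * (‖d‖ + 1) < δ := by
      rw [← lt_div_iff₀ (by positivity)]
      exact htδ
    nlinarith
  have hne : v + t • d ≠ v := by
    intro hcon
    have : t • d = 0 := by
      have := congrArg (fun x => x - v) hcon
      simpa using this
    rcases smul_eq_zero.mp this with h | h
    · exact htpos.ne' h
    · exact hd h
  have hmem2 : v + t • d ∈ N \ {v} := ⟨hball hmem, by simpa using hne⟩
  rw [← hNeq] at hmem2
  obtain ⟨hU, -⟩ := hmem2
  rw [mem_iUnion] at hU
  obtain ⟨i, hi⟩ := hU
  fin_cases i
  · exact h0 t htpos ht0 hi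
  · exact h1 t htpos ht1 hi
  · exact h2 t htpos ht2 hi

/-- If `K` sees the direction away from `w` at `v`, and contains a point strictly
on the `w`-side ray from `v`, then `v ∈ K`: contradiction. -/
lemma hitv {K : Set Pt} (hK : Convex ℝ K) {v w y : Pt} {c : ℝ}
    (hv : v ∉ K) (hs : sees K v (v - w)) (hy : y ∈ K) (hyc : y = v + c • (w - v))
    (hc : 0 < c) : False := by
  obtain ⟨s, hs0, -, hxK⟩ := hs 1 one_pos
  apply hv
  have hcs : (0:ℝ) < c + s := by linarith
  have hmem := hK hxK hy (le_of_lt (div_pos hc hcs)) (le_of_lt (div_pos hs0 hcs))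
    (by field_simp)
  have hident : (c / (c + s)) • (v + s • (v - w)) + (s / (c + s)) • y = v := by
    rw [hyc]
    match_scalars <;> field_simp <;> ring
  rwa [hident] at hmem

lemma no_antipodal {K : Set Pt} (hK : Convex ℝ K) {v d : Pt} (hv : v ∉ K)
    (h1 : sees K v d) (h2 : sees K v (-d)) : False := by
  obtain ⟨t, ht0, -, hyK⟩ := h2 1 one_pos
  refine hitv (w := v - d) hK hv ?_ hyK ?_ ht0
  · simpa using h1
  · have : (v - d) - v = -d := by abel
    rw [this]

lemma conflict1 {K : Set Pt} (hK : Convex ℝ K) {v w : Pt} (hv : v ∉ K)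
    (h1 : sees K v (v - w)) (h2 : sees K w (v - w)) : False := by
  obtain ⟨t, ht0, ht1, hyK⟩ := h2 1 one_pos
  refine hitv hK hv h1 hyK ?_ (by linarith : (0:ℝ) < 1 - t)
  module

lemma conflict2 {K : Set Pt} (hK : Convex ℝ K) {v w : Pt} (hv : v ∉ K)
    (h1 : sees K v (v - w)) (h2 : sees K w (w - v)) : False := by
  obtain ⟨t, ht0, ht1, hyK⟩ := h2 1 one_pos
  refine hitv hK hv h1 hyK ?_ (by linarith : (0:ℝ) < 1 + t)
  module

lemma sees_point_lt {K : Set Pt} {w p : Pt} (h : sees K w (p - w)) :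
    ∃ m : ℝ, 0 < m ∧ m < 1 ∧ p + m • (w - p) ∈ K := by
  obtain ⟨t, ht0, ht1, hy⟩ := h 1 one_pos
  refine ⟨1 - t, by linarith, by linarith, ?_⟩
  have : p + (1 - t) • (w - p) = w + t • (p - w) := by module
  rw [this]; exact hy

lemma sees_point_gt {K : Set Pt} {w p : Pt} (h : sees K w (w - p)) {δ : ℝ} (hδ : 0 < δ) :
    ∃ m : ℝ, 1 < m ∧ m < 1 + δ ∧ p + m • (w - p) ∈ K := by
  obtain ⟨t, ht0, ht1, hy⟩ := h δ hδ
  refine ⟨1 + t, by linarith, by linarith, ?_⟩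
  have : p + (1 + t) • (w - p) = w + t • (w - p) := by module
  rw [this]; exact hy


lemma seesTrans {K : Set Pt} (hK : Convex ℝ K) {p q r s y : Pt} {m α β : ℝ}
    (h1 : sees K p (p - r)) (hy : y ∈ K) (hym : y = p + m • (q - p)) (hm : 0 < m)
    (hrel : q - p = α • (r - p) + β • (s - p)) (hα : 0 < α) (hβ : 0 < β) :
    sees K p (s - p) := by
  intro ε hε
  obtain ⟨τ, hτ0, hτε, hxK⟩ := h1 (ε * α / β) (by positivity)
  have hD : 0 < m * α + τ := by positivity
  refine ⟨τ * m * β / (m * α + τ), by positivity, ?_, ?_⟩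
  · rw [div_lt_iff₀ hD]
    have h2 : τ * β < ε * α := (lt_div_iff₀ hβ).mp hτε
    nlinarith
  · have hμ0 : 0 ≤ τ / (m * α + τ) := by positivity
    have hμ1 : τ / (m * α + τ) ≤ 1 := by
      rw [div_le_one hD]; nlinarith
    have hmem := hK hxK hy (by linarith : 0 ≤ 1 - τ / (m * α + τ)) hμ0 (by ring)
    have hident : (1 - τ / (m * α + τ)) • (p + τ • (p - r)) + (τ / (m * α + τ)) • y
        = p + (τ * m * β / (m * α + τ)) • (s - p) := by
      rw [hym, hrel]
      match_scalars <;> field_simp <;> ring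
    rwa [hident] at hmem


lemma diagHit {K : Set Pt} (hK : Convex ℝ K) {p q r s : Pt} {m₁ m₂ α β : ℝ}
    (hp : p ∉ K) (hq : q ∉ K)
    (hy₁ : p + m₁ • (r - p) ∈ K) (hy₂ : p + m₂ • (s - p) ∈ K)
    (hm₁ : 0 < m₁) (hm₂ : 0 < m₂) (hm₁' : m₁ < α + β) (hm₂' : m₂ < α + β)
    (hrel : q - p = α • (r - p) + β • (s - p)) (hα : 0 < α) (hβ : 0 < β)
    (hsee : sees K p (p - q) ∨ sees K q (q - p)) : False := by
  have hD : 0 < m₂ * α + m₁ * β := by positivity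
  set κ := m₁ * m₂ / (m₂ * α + m₁ * β) with hκdef
  have hκ0 : 0 < κ := by positivity
  have hκ1 : κ < 1 := by
    rw [hκdef, div_lt_one hD]
    rcases le_total m₁ m₂ with h | h
    · nlinarith
    · nlinarith
  have hzK : (m₂ * α / (m₂ * α + m₁ * β)) • (p + m₁ • (r - p))
      + (m₁ * β / (m₂ * α + m₁ * β)) • (p + m₂ • (s - p)) ∈ K :=
    hK hy₁ hy₂ (by positivity) (by positivity) (by field_simp)
  have hz : (m₂ * α / (m₂ * α + m₁ * β)) • (p + m₁ • (r - p))
      + (m₁ * β / (m₂ * α + m₁ * β)) • (p + m₂ • (s - p)) = p + κ • (q - p) := by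
    rw [hκdef, hrel]
    match_scalars <;> field_simp <;> ring
  rw [hz] at hzK
  rcases hsee with hs | hs
  · exact hitv hK hp hs hzK rfl hκ0
  · refine hitv hK hq hs hzK ?_ (by linarith : (0:ℝ) < 1 - κ)
    module


lemma eqOfNe2 : ∀ (x y a b : Fin 3), a ≠ b → x ≠ a → x ≠ b → y ≠ a → y ≠ b → x = y := by decide

lemma mem3 : ∀ (a b c x : Fin 3), a ≠ b → a ≠ c → b ≠ c → x = a ∨ x = b ∨ x = c := by decide

lemma eq3 : ∀ (x a b c : Fin 3), a ≠ b → a ≠ c → b ≠ c → x ≠ a → x ≠ b → x = c := by decide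

lemma pigeon : ∀ (B Bq Cq : Fin 3), Bq ≠ Cq → (∀ x : Fin 3, x ≠ B → x ≠ Bq ∧ x ≠ Cq) → False := by
  decide

lemma exists3 : ∀ (B B' : Fin 3), B ≠ B' → ∃ c : Fin 3, c ≠ B ∧ c ≠ B' := by decide

lemma vertexClean {A B C A' B' C' Aq Bq Cq : Fin 3}
    (h1 : A ≠ B) (h2 : A ≠ C) (h3 : B ≠ C) (h4 : A' ≠ B') (h5 : A' ≠ C') (h6 : B' ≠ C')
    (h7 : Aq ≠ Bq) (h8 : Aq ≠ Cq) (h9 : Bq ≠ Cq)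
    (g1 : A = A' → A ≠ Bq ∧ A ≠ Cq) (g2 : A = C' → A ≠ Bq ∧ A ≠ Cq)
    (g3 : C = A' → C ≠ Bq ∧ C ≠ Cq) (g4 : C = C' → C ≠ Bq ∧ C ≠ Cq) :
    B ≠ B' ∧ Aq ≠ B ∧ Aq ≠ B' := by
  have key : ∀ x : Fin 3, x ≠ B → x ≠ B' → x ≠ Bq ∧ x ≠ Cq := by
    intro x hxB hxB'
    have hx1 : x = A ∨ x = C := by
      rcases mem3 A B C x h1 h2 h3 with h | h | h
      · exact Or.inl h
      · exact absurd h hxB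
      · exact Or.inr h
    have hx2 : x = A' ∨ x = C' := by
      rcases mem3 A' B' C' x h4 h5 h6 with h | h | h
      · exact Or.inl h
      · exact absurd h hxB'
      · exact Or.inr h
    rcases hx1 with rfl | rfl
    · rcases hx2 with h | h
      · exact g1 h
      · exact g2 h
    · rcases hx2 with h | h
      · exact g3 h
      · exact g4 h
  have hBB' : B ≠ B' := by
    intro hcon
    refine pigeon B Bq Cq h9 ?_
    intro x hxB
    exact key x hxB (hcon ▸ hxB)
  obtain ⟨c, hcB, hcB'⟩ := exists3 B B' hBB'
  obtain ⟨hc1, hc2⟩ := key c hcB hcB'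
  have hcAq : c = Aq := eq3 c Bq Cq Aq h9 (Ne.symm h7) (Ne.symm h8) hc1 hc2
  exact ⟨hBB', hcAq ▸ hcB, hcAq ▸ hcB'⟩


lemma comb1 (e01 e02 e03 e12 e13 e23 f01 f10 f02 f20 f03 f30 f12 f21 f13 f31 : Fin 3)
    (q01a : e01 ≠ f01) (q01c : f01 ≠ f10)
    (q02a : e02 ≠ f02) (q02b : e02 ≠ f20) (q02c : f02 ≠ f20)
    (q03a : e03 ≠ f03) (q03b : e03 ≠ f30) (q03c : f03 ≠ f30)
    (q12a : e12 ≠ f12) (q12b : e12 ≠ f21) (q12c : f12 ≠ f21)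
    (q13a : e13 ≠ f13) (q13b : e13 ≠ f31) (q13c : f13 ≠ f31)
    (c0a : f02 ≠ f03) (c0b : e01 ≠ f02) (c0c : e01 ≠ f03)
    (c1a : f12 ≠ f13) (c1b : e01 ≠ f12) (c1c : e01 ≠ f13)
    (c2a : f20 ≠ f21) (c2b : e23 ≠ f20) (c2c : e23 ≠ f21)
    (c3a : f30 ≠ f31) (c3b : e23 ≠ f30) (c3c : e23 ≠ f31)
    (n0a : (f02 = e01 ∨ f02 = f10) → f02 ≠ f03 ∧ f02 ≠ f30)
    (n1a : (f12 = e01 ∨ f12 = f01) → f12 ≠ f13 ∧ f12 ≠ f31)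
    (n1b : (f13 = e01 ∨ f13 = f01) → f13 ≠ f12 ∧ f13 ≠ f21)
    (hkey : f10 = f02) : False := by
  have hkey2 : f02 = f10 := hkey.symm
  subst hkey2
  have h1 := n0a (Or.inr rfl)
  have he03 : f02 = e03 := eq3 f02 f03 f30 e03 q03c (Ne.symm q03a) (Ne.symm q03b) h1.1 h1.2
  subst he03
  have hf01 : f03 = f01 := (eq3 f01 e01 f02 f03 c0b c0c c0a (Ne.symm q01a) q01c).symm
  subst hf01
  rcases mem3 e01 f02 f03 f12 c0b c0c c0a with h | h | h
  · exact c1b h.symm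
  · -- Case II : f12 = f02
    have h' : f02 = f12 := h.symm
    subst h'
    have hf13 : f03 = f13 :=
      (eq3 f13 e01 f02 f03 c0b c0c c0a (Ne.symm c1c) (Ne.symm c1a)).symm
    subst hf13
    have h2 := n1b (Or.inr rfl)
    have he12 : f03 = e12 := eq3 f03 f02 f21 e12 q12c (Ne.symm q12a) (Ne.symm q12b) h2.1 h2.2
    subst he12
    have hf30 : e01 = f30 :=
      (eq3 f30 f02 f03 e01 c0a (Ne.symm c0b) (Ne.symm c0c) (Ne.symm q03b) (Ne.symm q03c)).symm
    subst hf30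
    have hf21 : e01 = f21 :=
      (eq3 f21 f03 f02 e01 (Ne.symm c0a) (Ne.symm c0c) (Ne.symm c0b)
        (Ne.symm q12b) (Ne.symm q12c)).symm
    subst hf21
    have hf31 : f02 = f31 :=
      (eq3 f31 f03 e01 f02 (Ne.symm c0c) (Ne.symm c0a) c0b (Ne.symm q13c) (Ne.symm c3a)).symm
    subst hf31
    have he23 : f03 = e23 := (eq3 e23 e01 f02 f03 c0b c0c c0a c3b c3c).symm
    subst he23
    have hf20 : f20 = f02 := eq3 f20 e01 f03 f02 c0c c0b (Ne.symm c0a) c2a (Ne.symm c2b)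
    exact q02c hf20.symm
  · -- Case I : f12 = f03
    have h' : f03 = f12 := h.symm
    subst h'
    have h2 := n1a (Or.inr rfl)
    have he13 : f03 = e13 := eq3 f03 f13 f31 e13 q13c (Ne.symm q13a) (Ne.symm q13b) h2.1 h2.2
    subst he13
    have hf13 : f02 = f13 :=
      (eq3 f13 e01 f03 f02 c0c c0b (Ne.symm c0a) (Ne.symm c1c) (Ne.symm c1a)).symm
    subst hf13
    have hf30 : e01 = f30 :=
      (eq3 f30 f02 f03 e01 c0a (Ne.symm c0b) (Ne.symm c0c) (Ne.symm q03b) (Ne.symm q03c)).symm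
    subst hf30
    have hf31 : f31 = e01 :=
      eq3 f31 f02 f03 e01 c0a (Ne.symm c0b) (Ne.symm c0c) (Ne.symm q13c) (Ne.symm q13b)
    exact c3a hf31.symm


lemma comb (e01 e02 e03 e12 e13 e23 f01 f10 f02 f20 f03 f30 f12 f21 f13 f31 f23 f32 : Fin 3)
    (d01a : e01 ≠ f01) (d01b : e01 ≠ f10) (d01c : f01 ≠ f10)
    (d02a : e02 ≠ f02) (d02b : e02 ≠ f20) (d02c : f02 ≠ f20)
    (d03a : e03 ≠ f03) (d03b : e03 ≠ f30) (d03c : f03 ≠ f30)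
    (d12a : e12 ≠ f12) (d12b : e12 ≠ f21) (d12c : f12 ≠ f21)
    (d13a : e13 ≠ f13) (d13b : e13 ≠ f31) (d13c : f13 ≠ f31)
    (d23a : e23 ≠ f23) (d23b : e23 ≠ f32) (d23c : f23 ≠ f32)
    (n0a : (f02 = e01 ∨ f02 = f10) → f02 ≠ f03 ∧ f02 ≠ f30)
    (n0b : (f03 = e01 ∨ f03 = f10) → f03 ≠ f02 ∧ f03 ≠ f20)
    (n1a : (f12 = e01 ∨ f12 = f01) → f12 ≠ f13 ∧ f12 ≠ f31)
    (n1b : (f13 = e01 ∨ f13 = f01) → f13 ≠ f12 ∧ f13 ≠ f21)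
    (g0a : e02 = e03 → e02 ≠ f01 ∧ e02 ≠ f10) (g0b : e02 = f30 → e02 ≠ f01 ∧ e02 ≠ f10)
    (g0c : f20 = e03 → f20 ≠ f01 ∧ f20 ≠ f10) (g0d : f20 = f30 → f20 ≠ f01 ∧ f20 ≠ f10)
    (g1a : e12 = e13 → e12 ≠ f10 ∧ e12 ≠ f01) (g1b : e12 = f31 → e12 ≠ f10 ∧ e12 ≠ f01)
    (g1c : f21 = e13 → f21 ≠ f10 ∧ f21 ≠ f01) (g1d : f21 = f31 → f21 ≠ f10 ∧ f21 ≠ f01)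
    (g2a : e02 = e12 → e02 ≠ f23 ∧ e02 ≠ f32) (g2b : e02 = f12 → e02 ≠ f23 ∧ e02 ≠ f32)
    (g2c : f02 = e12 → f02 ≠ f23 ∧ f02 ≠ f32) (g2d : f02 = f12 → f02 ≠ f23 ∧ f02 ≠ f32)
    (g3a : e03 = e13 → e03 ≠ f32 ∧ e03 ≠ f23) (g3b : e03 = f13 → e03 ≠ f32 ∧ e03 ≠ f23)
    (g3c : f03 = e13 → f03 ≠ f32 ∧ f03 ≠ f23) (g3d : f03 = f13 → f03 ≠ f32 ∧ f03 ≠ f23) :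
    False := by
  have hC0 := vertexClean d02a d02b d02c d03a d03b d03c d01a d01b d01c g0a g0b g0c g0d
  have hC1 := vertexClean d12a d12b d12c d13a d13b d13c d01b d01a (Ne.symm d01c) g1a g1b g1c g1d
  have hC2 := vertexClean d02b d02a (Ne.symm d02c) d12b d12a (Ne.symm d12c) d23a d23b d23c
    g2a g2b g2c g2d
  have hC3 := vertexClean d03b d03a (Ne.symm d03c) d13b d13a (Ne.symm d13c) d23b d23a
    (Ne.symm d23c) g3a g3b g3c g3d
  rcases mem3 e01 f02 f03 f10 hC0.2.1 hC0.2.2 hC0.1 with h | h | h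
  · exact d01b h.symm
  · exact comb1 e01 e02 e03 e12 e13 e23 f01 f10 f02 f20 f03 f30 f12 f21 f13 f31
      d01a d01c d02a d02b d02c d03a d03b d03c d12a d12b d12c d13a d13b d13c
      hC0.1 hC0.2.1 hC0.2.2 hC1.1 hC1.2.1 hC1.2.2 hC2.1 hC2.2.1 hC2.2.2 hC3.1 hC3.2.1 hC3.2.2
      n0a n1a n1b h
  · exact comb1 e01 e03 e02 e13 e12 e23 f01 f10 f03 f30 f02 f20 f13 f31 f12 f21
      d01a d01c d03a d03b d03c d02a d02b d02c d13a d13b d13c d12a d12b d12c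
      (Ne.symm hC0.1) hC0.2.2 hC0.2.1 (Ne.symm hC1.1) hC1.2.2 hC1.2.1
      hC3.1 hC3.2.1 hC3.2.2 hC2.1 hC2.2.1 hC2.2.2
      n0b n1b n1a h


lemma mkN5 {K : Fin 3 → Set Pt} (hconv : ∀ i, Convex ℝ (K i))
    {v q r s : Pt} {α β : ℝ} (hα : 0 < α) (hβ : 0 < β)
    (hrel : q - v = α • (r - v) + β • (s - v))
    {cvr e fqv fvs fsv : Fin 3}
    (hcvr : sees (K cvr) v (v - r))
    (he : sees (K e) q (v - q)) (hfqv : sees (K fqv) q (q - v))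
    (hfvs : sees (K fvs) v (v - s)) (hfsv : sees (K fsv) s (s - v))
    (hvK : ∀ i, v ∉ K i) (hsK : ∀ i, s ∉ K i)
    (hor : cvr = e ∨ cvr = fqv) : cvr ≠ fvs ∧ cvr ≠ fsv := by
  obtain ⟨m, hm0, hyK⟩ : ∃ m : ℝ, 0 < m ∧ v + m • (q - v) ∈ K cvr := by
    rcases hor with h | h
    · obtain ⟨m, hm0, -, hy⟩ := sees_point_lt (show sees (K cvr) q (v - q) from h ▸ he)
      exact ⟨m, hm0, hy⟩
    · obtain ⟨m, hm1, -, hy⟩ :=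
        sees_point_gt (show sees (K cvr) q (q - v) from h ▸ hfqv) one_pos
      exact ⟨m, by linarith, hy⟩
  have hS : sees (K cvr) v (s - v) := seesTrans (hconv cvr) hcvr hyK rfl hm0 hrel hα hβ
  constructor
  · intro hcon
    refine no_antipodal (hconv cvr) (hvK cvr) hS ?_
    have : -(s - v) = v - s := by abel
    rw [this]
    exact hcon ▸ hfvs
  · intro hcon
    exact conflict1 (hconv cvr) (hsK cvr) (hcon ▸ hfsv) hS

lemma mkF7 {K : Fin 3 → Set Pt} (hconv : ∀ i, Convex ℝ (K i))
    {v q r s : Pt} {α β : ℝ} (hα : 0 < α) (hβ : 0 < β) (hsum : 1 < α + β)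
    (hrel : q - v = α • (r - v) + β • (s - v))
    {X Y fvq fqv : Fin 3}
    (hX : sees (K X) r (v - r) ∨ sees (K X) r (r - v))
    (hY : sees (K Y) s (v - s) ∨ sees (K Y) s (s - v))
    (hfvq : sees (K fvq) v (v - q)) (hfqv : sees (K fqv) q (q - v))
    (hvK : ∀ i, v ∉ K i) (hqK : ∀ i, q ∉ K i)
    (hXY : X = Y) : X ≠ fvq ∧ X ≠ fqv := by
  obtain ⟨m₁, hm₁0, hm₁', hy₁⟩ : ∃ m₁ : ℝ, 0 < m₁ ∧ m₁ < α + β ∧ v + m₁ • (r - v) ∈ K X := by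
    rcases hX with h | h
    · obtain ⟨m, hm0, hm1, hy⟩ := sees_point_lt h
      exact ⟨m, hm0, by linarith, hy⟩
    · obtain ⟨m, hm1, hm2, hy⟩ := sees_point_gt h (show (0:ℝ) < α + β - 1 by linarith)
      exact ⟨m, by linarith, by linarith, hy⟩
  obtain ⟨m₂, hm₂0, hm₂', hy₂⟩ : ∃ m₂ : ℝ, 0 < m₂ ∧ m₂ < α + β ∧ v + m₂ • (s - v) ∈ K X := by
    rcases hXY ▸ hY with h | h
    · obtain ⟨m, hm0, hm1, hy⟩ := sees_point_lt h
      exact ⟨m, hm0, by linarith, hy⟩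
    · obtain ⟨m, hm1, hm2, hy⟩ := sees_point_gt h (show (0:ℝ) < α + β - 1 by linarith)
      exact ⟨m, by linarith, by linarith, hy⟩
  constructor
  · intro h
    exact diagHit (hconv X) (hvK X) (hqK X) hy₁ hy₂ hm₁0 hm₂0 hm₁' hm₂' hrel hα hβ
      (Or.inl (h ▸ hfvq))
  · intro h
    exact diagHit (hconv X) (hvK X) (hqK X) hy₁ hy₂ hm₁0 hm₂0 hm₁' hm₂' hrel hα hβ
      (Or.inr (h ▸ hfqv))

lemma pairSetup {K : Fin 3 → Set Pt} (hconv : ∀ i, Convex ℝ (K i)) {u w : Pt}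
    (hu : ∀ i, u ∉ K i) (hw : ∀ i, w ∉ K i) (hne : u ≠ w)
    (hencu : ∃ N ∈ nhds u, (⋃ i, K i) ∩ N = N \ {u})
    (hencw : ∃ N ∈ nhds w, (⋃ i, K i) ∩ N = N \ {w}) :
    ∃ e fu fw : Fin 3, sees (K e) u (w - u) ∧ sees (K e) w (u - w) ∧
      sees (K fu) u (u - w) ∧ sees (K fw) w (w - u) ∧ e ≠ fu ∧ e ≠ fw ∧ fu ≠ fw := by
  obtain ⟨e1, he1⟩ := sees_total (sub_ne_zero.mpr (Ne.symm hne)) hencu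
  obtain ⟨e2, he2⟩ := sees_total (sub_ne_zero.mpr hne) hencw
  obtain ⟨fu, hfu⟩ := sees_total (sub_ne_zero.mpr hne) hencu
  obtain ⟨fw, hfw⟩ := sees_total (sub_ne_zero.mpr (Ne.symm hne)) hencw
  have d1 : e1 ≠ fu := by
    intro h
    refine no_antipodal (hconv e1) (hu e1) he1 ?_
    have : -(w - u) = u - w := by abel
    rw [this]
    exact h ▸ hfu
  have d2 : e1 ≠ fw := by
    intro h
    exact conflict1 (hconv e1) (hw e1) (h ▸ hfw) he1
  have d3 : e2 ≠ fw := by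
    intro h
    refine no_antipodal (hconv e2) (hw e2) he2 ?_
    have : -(u - w) = w - u := by abel
    rw [this]
    exact h ▸ hfw
  have d4 : e2 ≠ fu := by
    intro h
    exact conflict1 (hconv e2) (hu e2) (h ▸ hfu) he2
  have d5 : fu ≠ fw := by
    intro h
    exact conflict2 (hconv fu) (hu fu) hfu (h ▸ hfw)
  have he12 : e1 = e2 := eqOfNe2 e1 e2 fu fw d5 d1 d2 d4 d3
  exact ⟨e1, fu, fw, he1, he12 ▸ he2, hfu, hfw, d1, d2, d5⟩

lemma rel_all {p q r s z : Pt} {lam nu : ℝ} (h0l : 0 < lam) (hl1 : lam < 1)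
    (h0n : 0 < nu) (hn1 : nu < 1)
    (hz1 : z = p + lam • (q - p)) (hz2 : z = r + nu • (s - r)) :
    (q - p = ((1 - nu)/lam) • (r - p) + (nu/lam) • (s - p)) ∧
    (p - q = ((1 - nu)/(1 - lam)) • (r - q) + (nu/(1 - lam)) • (s - q)) ∧
    (s - r = ((1 - lam)/nu) • (p - r) + (lam/nu) • (q - r)) ∧
    (r - s = ((1 - lam)/(1 - nu)) • (p - s) + (lam/(1 - nu)) • (q - s)) := by
  have heq : p + lam • (q - p) = r + nu • (s - r) := hz1 ▸ hz2
  have h1 : p.1 + lam * (q.1 - p.1) = r.1 + nu * (s.1 - r.1) := by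
    have := congrArg Prod.fst heq
    simpa using this
  have h2 : p.2 + lam * (q.2 - p.2) = r.2 + nu * (s.2 - r.2) := by
    have := congrArg Prod.snd heq
    simpa using this
  have hlam : lam ≠ 0 := ne_of_gt h0l
  have hlam1 : (1:ℝ) - lam ≠ 0 := by linarith
  have hnu : nu ≠ 0 := ne_of_gt h0n
  have hnu1 : (1:ℝ) - nu ≠ 0 := by linarith
  refine ⟨?_, ?_, ?_, ?_⟩ <;>
    refine Prod.ext ?_ ?_ <;>
    simp only [Prod.fst_add, Prod.snd_add, Prod.fst_sub, Prod.snd_sub, Prod.smul_fst,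
      Prod.smul_snd, smul_eq_mul] <;>
    field_simp <;>
    first
      | linear_combination h1
      | linear_combination h2
      | linear_combination -h1
      | linear_combination -h2


theorem core (K : Fin 3 → Set Pt) (hconv : ∀ i, Convex ℝ (K i))
    (p q r s : Pt)
    (hpq : p ≠ q) (hpr : p ≠ r) (hps : p ≠ s) (hqr : q ≠ r) (hqs : q ≠ s) (hrs : r ≠ s)
    (hKp : ∀ i, p ∉ K i) (hKq : ∀ i, q ∉ K i) (hKr : ∀ i, r ∉ K i) (hKs : ∀ i, s ∉ K i)
    (hep : ∃ N ∈ nhds p, (⋃ i, K i) ∩ N = N \ {p})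
    (heq : ∃ N ∈ nhds q, (⋃ i, K i) ∩ N = N \ {q})
    (her : ∃ N ∈ nhds r, (⋃ i, K i) ∩ N = N \ {r})
    (hes : ∃ N ∈ nhds s, (⋃ i, K i) ∩ N = N \ {s})
    {z : Pt} {lam nu : ℝ} (h0l : 0 < lam) (hl1 : lam < 1) (h0n : 0 < nu) (hn1 : nu < 1)
    (hz1 : z = p + lam • (q - p)) (hz2 : z = r + nu • (s - r)) : False := by
  obtain ⟨rel0, rel1, rel2, rel3⟩ := rel_all h0l hl1 h0n hn1 hz1 hz2
  -- positivity of all coefficients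
  have ha0 : (0:ℝ) < (1 - nu)/lam := div_pos (by linarith) h0l
  have hb0 : (0:ℝ) < nu/lam := div_pos h0n h0l
  have ha1 : (0:ℝ) < (1 - nu)/(1 - lam) := div_pos (by linarith) (by linarith)
  have hb1 : (0:ℝ) < nu/(1 - lam) := div_pos h0n (by linarith)
  have ha2 : (0:ℝ) < (1 - lam)/nu := div_pos (by linarith) h0n
  have hb2 : (0:ℝ) < lam/nu := div_pos h0l h0n
  have ha3 : (0:ℝ) < (1 - lam)/(1 - nu) := div_pos (by linarith) (by linarith)
  have hb3 : (0:ℝ) < lam/(1 - nu) := div_pos h0l (by linarith)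
  have hsum0 : (1:ℝ) < (1 - nu)/lam + nu/lam := by
    rw [← add_div, lt_div_iff₀ h0l]; linarith
  have hsum1 : (1:ℝ) < (1 - nu)/(1 - lam) + nu/(1 - lam) := by
    rw [← add_div, lt_div_iff₀ (show (0:ℝ) < 1 - lam by linarith)]; linarith
  have hsum2 : (1:ℝ) < (1 - lam)/nu + lam/nu := by
    rw [← add_div, lt_div_iff₀ h0n]; linarith
  have hsum3 : (1:ℝ) < (1 - lam)/(1 - nu) + lam/(1 - nu) := by
    rw [← add_div, lt_div_iff₀ (show (0:ℝ) < 1 - nu by linarith)]; linarith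
  -- pair setups
  obtain ⟨e01, f01, f10, he01a, he01b, hf01, hf10, d01a, d01b, d01c⟩ :=
    pairSetup hconv hKp hKq hpq hep heq
  obtain ⟨e02, f02, f20, he02a, he02b, hf02, hf20, d02a, d02b, d02c⟩ :=
    pairSetup hconv hKp hKr hpr hep her
  obtain ⟨e03, f03, f30, he03a, he03b, hf03, hf30, d03a, d03b, d03c⟩ :=
    pairSetup hconv hKp hKs hps hep hes
  obtain ⟨e12, f12, f21, he12a, he12b, hf12, hf21, d12a, d12b, d12c⟩ :=
    pairSetup hconv hKq hKr hqr heq her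
  obtain ⟨e13, f13, f31, he13a, he13b, hf13, hf31, d13a, d13b, d13c⟩ :=
    pairSetup hconv hKq hKs hqs heq hes
  obtain ⟨e23, f23, f32, he23a, he23b, hf23, hf32, d23a, d23b, d23c⟩ :=
    pairSetup hconv hKr hKs hrs her hes
  have rel0' := rel0.trans (add_comm _ _)
  have rel1' := rel1.trans (add_comm _ _)
  refine comb e01 e02 e03 e12 e13 e23 f01 f10 f02 f20 f03 f30 f12 f21 f13 f31 f23 f32
    d01a d01b d01c d02a d02b d02c d03a d03b d03c d12a d12b d12c d13a d13b d13c
    d23a d23b d23c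
    (mkN5 hconv ha0 hb0 rel0 hf02 he01b hf10 hf03 hf30 hKp hKs)
    (mkN5 hconv hb0 ha0 rel0' hf03 he01b hf10 hf02 hf20 hKp hKr)
    (mkN5 hconv ha1 hb1 rel1 hf12 he01a hf01 hf13 hf31 hKq hKs)
    (mkN5 hconv hb1 ha1 rel1' hf13 he01a hf01 hf12 hf21 hKq hKr)
    (mkF7 hconv ha0 hb0 hsum0 rel0 (Or.inl he02b) (Or.inl he03b) hf01 hf10 hKp hKq)
    (mkF7 hconv ha0 hb0 hsum0 rel0 (Or.inl he02b) (Or.inr hf30) hf01 hf10 hKp hKq)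
    (mkF7 hconv ha0 hb0 hsum0 rel0 (Or.inr hf20) (Or.inl he03b) hf01 hf10 hKp hKq)
    (mkF7 hconv ha0 hb0 hsum0 rel0 (Or.inr hf20) (Or.inr hf30) hf01 hf10 hKp hKq)
    (mkF7 hconv ha1 hb1 hsum1 rel1 (Or.inl he12b) (Or.inl he13b) hf10 hf01 hKq hKp)
    (mkF7 hconv ha1 hb1 hsum1 rel1 (Or.inl he12b) (Or.inr hf31) hf10 hf01 hKq hKp)
    (mkF7 hconv ha1 hb1 hsum1 rel1 (Or.inr hf21) (Or.inl he13b) hf10 hf01 hKq hKp)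
    (mkF7 hconv ha1 hb1 hsum1 rel1 (Or.inr hf21) (Or.inr hf31) hf10 hf01 hKq hKp)
    (mkF7 hconv ha2 hb2 hsum2 rel2 (Or.inl he02a) (Or.inl he12a) hf23 hf32 hKr hKs)
    (mkF7 hconv ha2 hb2 hsum2 rel2 (Or.inl he02a) (Or.inr hf12) hf23 hf32 hKr hKs)
    (mkF7 hconv ha2 hb2 hsum2 rel2 (Or.inr hf02) (Or.inl he12a) hf23 hf32 hKr hKs)
    (mkF7 hconv ha2 hb2 hsum2 rel2 (Or.inr hf02) (Or.inr hf12) hf23 hf32 hKr hKs)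
    (mkF7 hconv ha3 hb3 hsum3 rel3 (Or.inl he03a) (Or.inl he13a) hf32 hf23 hKs hKr)
    (mkF7 hconv ha3 hb3 hsum3 rel3 (Or.inl he03a) (Or.inr hf13) hf32 hf23 hKs hKr)
    (mkF7 hconv ha3 hb3 hsum3 rel3 (Or.inr hf03) (Or.inl he13a) hf32 hf23 hKs hKr)
    (mkF7 hconv ha3 hb3 hsum3 rel3 (Or.inr hf03) (Or.inr hf13) hf32 hf23 hKs hKr)


end Stmt6

open Set Stmt6 in
/-- Four points in convex position cannot be encapsulated by three convex sets. -/

theorem stmt_6 (a : Fin 4 → ℝ × ℝ) (hinj : Function.Injective a)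
    (hconvpos : ∀ i, a i ∈ (convexHull ℝ (Set.range a)).extremePoints ℝ)
    (K : Fin 3 → Set (ℝ × ℝ)) (hconv : ∀ i, Convex ℝ (K i))
    (hdisj : ∀ i, K i ⊆ (Set.range a)ᶜ)
    (henc : ∀ j, ∃ N ∈ nhds (a j), (⋃ i, K i) ∩ N = N \ {a j}) : False := by
  have hnotaff : ¬ AffineIndependent ℝ a := by
    intro h
    have hcard := h.card_le_finrank_succ
    rw [Fintype.card_fin] at hcard
    have hle : Module.finrank ℝ ↥(vectorSpan ℝ (Set.range a)) ≤ Module.finrank ℝ Pt :=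
      Submodule.finrank_le _
    have h2 : Module.finrank ℝ Pt = 2 := by
      rw [Module.finrank_prod, Module.finrank_self]
    omega
  obtain ⟨I, z, hz1, hz2⟩ := Convex.radon_partition hnotaff
  have hout : ∀ i : Fin 4, a i ∉ convexHull ℝ (Set.range a \ {a i}) := by
    intro i hmem
    have hx := ((convex_convexHull ℝ
      (Set.range a)).mem_extremePoints_iff_mem_diff_convexHull_diff).mp (hconvpos i)
    exact hx.2 (convexHull_mono (diff_subset_diff_left (subset_convexHull ℝ _)) hmem)
  have hK : ∀ (m : Fin 4) i, a m ∉ K i := fun m i hm => (hdisj i hm) (mem_range_self m)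
  have hdeg : ∀ (i : Fin 4) (J : Set (Fin 4)), i ∉ J → z = a i →
      z ∈ convexHull ℝ (a '' J) → False := by
    intro i J hiJ hzi hzJ
    rw [hzi] at hzJ
    apply hout i
    refine convexHull_mono ?_ hzJ
    rintro x ⟨j, hj, rfl⟩
    refine ⟨mem_range_self j, ?_⟩
    intro hc
    rw [mem_singleton_iff] at hc
    exact hiJ (hinj hc ▸ hj)
  have htwo : ∀ (i j k l : Fin 4), i ≠ j → k ≠ l → i ≠ k → i ≠ l → j ≠ k → j ≠ l →
      z ∈ convexHull ℝ {a i, a j} → z ∈ convexHull ℝ {a k, a l} → False := by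
    intro i j k l hij hkl hik hil hjk hjl hzij hzkl
    rw [convexHull_pair, segment_eq_image'] at hzij hzkl
    obtain ⟨lam, ⟨hlam0, hlam1⟩, hzeq1⟩ := hzij
    obtain ⟨nu, ⟨hnu0, hnu1⟩, hzeq2⟩ := hzkl
    simp only at hzeq1 hzeq2
    have hkl' : z ∈ convexHull ℝ (a '' {k, l}) := by
      rw [image_pair, convexHull_pair, segment_eq_image']
      exact ⟨nu, ⟨hnu0, hnu1⟩, hzeq2⟩
    have hij' : z ∈ convexHull ℝ (a '' {i, j}) := by
      rw [image_pair, convexHull_pair, segment_eq_image']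
      exact ⟨lam, ⟨hlam0, hlam1⟩, hzeq1⟩
    have hlam0' : 0 < lam := by
      rcases eq_or_lt_of_le hlam0 with h | h
      · exfalso
        refine hdeg i {k, l} ?_ ?_ hkl'
        · simp only [mem_insert_iff, mem_singleton_iff]
          push_neg
          exact ⟨hik, hil⟩
        · rw [← hzeq1, ← h]; simp
      · exact h
    have hlam1' : lam < 1 := by
      rcases lt_or_eq_of_le hlam1 with h | h
      · exact h
      · exfalso
        refine hdeg j {k, l} ?_ ?_ hkl'
        · simp only [mem_insert_iff, mem_singleton_iff]
          push_neg
          exact ⟨hjk, hjl⟩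
        · rw [← hzeq1, h]; simp
    have hnu0' : 0 < nu := by
      rcases eq_or_lt_of_le hnu0 with h | h
      · exfalso
        refine hdeg k {i, j} ?_ ?_ hij'
        · simp only [mem_insert_iff, mem_singleton_iff]
          push_neg
          exact ⟨Ne.symm hik, Ne.symm hjk⟩
        · rw [← hzeq2, ← h]; simp
      · exact h
    have hnu1' : nu < 1 := by
      rcases lt_or_eq_of_le hnu1 with h | h
      · exact h
      · exfalso
        refine hdeg l {i, j} ?_ ?_ hij'
        · simp only [mem_insert_iff, mem_singleton_iff]
          push_neg
          exact ⟨Ne.symm hil, Ne.symm hjl⟩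
        · rw [← hzeq2, h]; simp
    exact core K hconv (a i) (a j) (a k) (a l)
      (fun hc => hij (hinj hc)) (fun hc => hik (hinj hc)) (fun hc => hil (hinj hc))
      (fun hc => hjk (hinj hc)) (fun hc => hjl (hinj hc)) (fun hc => hkl (hinj hc))
      (hK i) (hK j) (hK k) (hK l) (henc i) (henc j) (henc k) (henc l)
      hlam0' hlam1' hnu0' hnu1' hzeq1.symm hzeq2.symm
  have hone : ∀ (i : Fin 4) (J : Set (Fin 4)), i ∉ J → z ∈ convexHull ℝ (a '' {i}) →
      z ∈ convexHull ℝ (a '' J) → False := by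
    intro i J hiJ hz1' hz2'
    rw [image_singleton, convexHull_singleton, mem_singleton_iff] at hz1'
    exact hdeg i J hiJ hz1' hz2'
  by_cases h0 : (0 : Fin 4) ∈ I <;> by_cases h1 : (1 : Fin 4) ∈ I <;>
    by_cases h2 : (2 : Fin 4) ∈ I <;> by_cases h3 : (3 : Fin 4) ∈ I
  -- 1111 : Iᶜ = ∅
  · have hc : Iᶜ = (∅ : Set (Fin 4)) := by
      ext x; fin_cases x <;> simp [h0, h1, h2, h3]
    rw [hc, image_empty, convexHull_empty] at hz2
    exact hz2
  -- 1110 : I = {0,1,2}, Iᶜ = {3}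
  · have hc : Iᶜ = ({3} : Set (Fin 4)) := by
      ext x; fin_cases x <;> simp [h0, h1, h2, h3]
    have hI : I = ({0, 1, 2} : Set (Fin 4)) := by
      ext x; fin_cases x <;> simp [h0, h1, h2, h3]
    rw [hc] at hz2
    rw [hI] at hz1
    exact hone 3 {0, 1, 2} (by simp) hz2 hz1
  -- 1101 : I = {0,1,3}, Iᶜ = {2}
  · have hc : Iᶜ = ({2} : Set (Fin 4)) := by
      ext x; fin_cases x <;> simp [h0, h1, h2, h3]
    have hI : I = ({0, 1, 3} : Set (Fin 4)) := by
      ext x; fin_cases x <;> simp [h0, h1, h2, h3]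
    rw [hc] at hz2; rw [hI] at hz1
    exact hone 2 {0, 1, 3} (by simp) hz2 hz1
  -- 1100 : I = {0,1}, Iᶜ = {2,3}
  · have hI : I = ({0, 1} : Set (Fin 4)) := by
      ext x; fin_cases x <;> simp [h0, h1, h2, h3]
    have hc : Iᶜ = ({2, 3} : Set (Fin 4)) := by
      ext x; fin_cases x <;> simp [h0, h1, h2, h3]
    rw [hI, image_pair] at hz1; rw [hc, image_pair] at hz2
    exact htwo 0 1 2 3 (by decide) (by decide) (by decide) (by decide) (by decide) (by decide)
      hz1 hz2
  -- 1011 : I = {0,2,3}, Iᶜ = {1}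
  · have hc : Iᶜ = ({1} : Set (Fin 4)) := by
      ext x; fin_cases x <;> simp [h0, h1, h2, h3]
    have hI : I = ({0, 2, 3} : Set (Fin 4)) := by
      ext x; fin_cases x <;> simp [h0, h1, h2, h3]
    rw [hc] at hz2; rw [hI] at hz1
    exact hone 1 {0, 2, 3} (by simp) hz2 hz1
  -- 1010 : I = {0,2}, Iᶜ = {1,3}
  · have hI : I = ({0, 2} : Set (Fin 4)) := by
      ext x; fin_cases x <;> simp [h0, h1, h2, h3]
    have hc : Iᶜ = ({1, 3} : Set (Fin 4)) := by
      ext x; fin_cases x <;> simp [h0, h1, h2, h3]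
    rw [hI, image_pair] at hz1; rw [hc, image_pair] at hz2
    exact htwo 0 2 1 3 (by decide) (by decide) (by decide) (by decide) (by decide) (by decide)
      hz1 hz2
  -- 1001 : I = {0,3}, Iᶜ = {1,2}
  · have hI : I = ({0, 3} : Set (Fin 4)) := by
      ext x; fin_cases x <;> simp [h0, h1, h2, h3]
    have hc : Iᶜ = ({1, 2} : Set (Fin 4)) := by
      ext x; fin_cases x <;> simp [h0, h1, h2, h3]
    rw [hI, image_pair] at hz1; rw [hc, image_pair] at hz2
    exact htwo 0 3 1 2 (by decide) (by decide) (by decide) (by decide) (by decide) (by decide)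
      hz1 hz2
  -- 1000 : I = {0}
  · have hI : I = ({0} : Set (Fin 4)) := by
      ext x; fin_cases x <;> simp [h0, h1, h2, h3]
    rw [hI] at hz1
    exact hone 0 Iᶜ (by simp [h0]) hz1 hz2
  -- 0111 : I = {1,2,3}, Iᶜ = {0}
  · have hc : Iᶜ = ({0} : Set (Fin 4)) := by
      ext x; fin_cases x <;> simp [h0, h1, h2, h3]
    have hI : I = ({1, 2, 3} : Set (Fin 4)) := by
      ext x; fin_cases x <;> simp [h0, h1, h2, h3]
    rw [hc] at hz2; rw [hI] at hz1
    exact hone 0 {1, 2, 3} (by simp) hz2 hz1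
  -- 0110 : I = {1,2}, Iᶜ = {0,3}
  · have hI : I = ({1, 2} : Set (Fin 4)) := by
      ext x; fin_cases x <;> simp [h0, h1, h2, h3]
    have hc : Iᶜ = ({0, 3} : Set (Fin 4)) := by
      ext x; fin_cases x <;> simp [h0, h1, h2, h3]
    rw [hI, image_pair] at hz1; rw [hc, image_pair] at hz2
    exact htwo 1 2 0 3 (by decide) (by decide) (by decide) (by decide) (by decide) (by decide)
      hz1 hz2
  -- 0101 : I = {1,3}, Iᶜ = {0,2}
  · have hI : I = ({1, 3} : Set (Fin 4)) := by
      ext x; fin_cases x <;> simp [h0, h1, h2, h3]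
    have hc : Iᶜ = ({0, 2} : Set (Fin 4)) := by
      ext x; fin_cases x <;> simp [h0, h1, h2, h3]
    rw [hI, image_pair] at hz1; rw [hc, image_pair] at hz2
    exact htwo 1 3 0 2 (by decide) (by decide) (by decide) (by decide) (by decide) (by decide)
      hz1 hz2
  -- 0100 : I = {1}
  · have hI : I = ({1} : Set (Fin 4)) := by
      ext x; fin_cases x <;> simp [h0, h1, h2, h3]
    rw [hI] at hz1
    exact hone 1 Iᶜ (by simp [h1]) hz1 hz2
  -- 0011 : I = {2,3}, Iᶜ = {0,1}
  · have hI : I = ({2, 3} : Set (Fin 4)) := by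
      ext x; fin_cases x <;> simp [h0, h1, h2, h3]
    have hc : Iᶜ = ({0, 1} : Set (Fin 4)) := by
      ext x; fin_cases x <;> simp [h0, h1, h2, h3]
    rw [hI, image_pair] at hz1; rw [hc, image_pair] at hz2
    exact htwo 2 3 0 1 (by decide) (by decide) (by decide) (by decide) (by decide) (by decide)
      hz1 hz2
  -- 0010 : I = {2}
  · have hI : I = ({2} : Set (Fin 4)) := by
      ext x; fin_cases x <;> simp [h0, h1, h2, h3]
    rw [hI] at hz1
    exact hone 2 Iᶜ (by simp [h2]) hz1 hz2
  -- 0001 : I = {3}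
  · have hI : I = ({3} : Set (Fin 4)) := by
      ext x; fin_cases x <;> simp [h0, h1, h2, h3]
    rw [hI] at hz1
    exact hone 3 Iᶜ (by simp [h3]) hz1 hz2
  -- 0000 : I = ∅
  · have hI : I = (∅ : Set (Fin 4)) := by
      ext x; fin_cases x <;> simp [h0, h1, h2, h3]
    rw [hI, image_empty, convexHull_empty] at hz1
    exact hz1
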